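/- Let (M, ρ, μ) be a doubling metric measure space with dimension d. Then for every σ > d there is a constant c > 0 such that for all x, y ∈ M and t > 0, ∫_M (1 + ρ(x,u)/t)^{-σ} (1 + ρ(u,y)/t)^{-σ} dμ(u) ≤ c μ(B(x,t)) (1 + ρ(x,y)/t)^{-σ+d}. -/

import Mathlib

open MeasureTheory Metric Set

namespace IDCaux

noncomputable def Bk (σ : ℝ) : ℕ → ENNReal
  | 0 => 1
  | k + 1 => (ENNReal.ofReal ((2 : ℝ) ^ (-σ))) ^ k

noncomputable def Aenn (c₀ σ : ℝ) : ENNReal :=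
  1 + ENNReal.ofReal c₀ * (1 - ENNReal.ofReal (c₀ * (2 : ℝ) ^ (-σ)))⁻¹

variable {M : Type*} [MetricSpace M] [MeasurableSpace M] {μ : Measure M} {c₀ σ : ℝ}

lemma ball_pow_bound (hc₀ : 1 < c₀)
    (hfin : ∀ (x : M) (r : ℝ), 0 < r → μ (ball x r) < ⊤)
    (hdbl : ∀ (x : M) (r : ℝ), 0 < r →
      (μ (ball x (2 * r))).toReal ≤ c₀ * (μ (ball x r)).toReal)
    (x : M) (t : ℝ) (ht : 0 < t) (k : ℕ) :
    μ (ball x (2 ^ k * t)) ≤ ENNReal.ofReal c₀ ^ k * μ (ball x t) := by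
  induction k with
  | zero => simp
  | succ n ih =>
    have h2 : (0:ℝ) < 2 ^ n * t := by positivity
    have h1 : μ (ball x (2 * (2 ^ n * t))) ≤ ENNReal.ofReal c₀ * μ (ball x (2 ^ n * t)) := by
      have hne : μ (ball x (2 * (2 ^ n * t))) ≠ ⊤ := (hfin x _ (by positivity)).ne
      have hne2 : μ (ball x (2 ^ n * t)) ≠ ⊤ := (hfin x _ h2).ne
      rw [← ENNReal.ofReal_toReal hne, ← ENNReal.ofReal_toReal hne2,
        ← ENNReal.ofReal_mul (by linarith : (0:ℝ) ≤ c₀)]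
      exact ENNReal.ofReal_le_ofReal (hdbl x _ h2)
    have hrad : (2:ℝ) ^ (n+1) * t = 2 * (2 ^ n * t) := by ring
    calc μ (ball x (2 ^ (n+1) * t)) = μ (ball x (2 * (2 ^ n * t))) := by rw [hrad]
      _ ≤ ENNReal.ofReal c₀ * μ (ball x (2 ^ n * t)) := h1
      _ ≤ ENNReal.ofReal c₀ * (ENNReal.ofReal c₀ ^ n * μ (ball x t)) := by gcongr
      _ = ENNReal.ofReal c₀ ^ (n+1) * μ (ball x t) := by ring

lemma exists_cover (μ : Measure M) (x : M) (t : ℝ) (ht : 0 < t) :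
    ∃ D : ℕ → Set M, (∀ k, MeasurableSet (D k)) ∧
      Pairwise (Function.onFun Disjoint D) ∧
      (⋃ k, D k) = univ ∧ (∀ k, μ (D k) ≤ μ (ball x (2 ^ k * t))) ∧
      (∀ k u, u ∈ D (k + 1) → 2 ^ k * t ≤ dist x u) := by
  set T : ℕ → Set M := fun k => toMeasurable μ (ball x (2 ^ k * t)) with hT
  set U : ℕ → Set M := fun k => ⋂ (j : ℕ) (_ : k ≤ j), T j with hU
  have hUmeas : ∀ k, MeasurableSet (U k) := fun k =>
    MeasurableSet.iInter fun j => MeasurableSet.iInter fun _ => measurableSet_toMeasurable μ _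
  have hUmono : Monotone U := fun a b hab => by
    intro u hu
    simp only [hU, mem_iInter] at hu ⊢
    exact fun j hj => hu j (hab.trans hj)
  have hballU : ∀ k, ball x (2 ^ k * t) ⊆ U k := by
    intro k u hu
    simp only [hU, mem_iInter]
    intro j hj
    have : ball x (2 ^ k * t) ⊆ ball x (2 ^ j * t) := by
      apply ball_subset_ball
      have : (2:ℝ) ^ k ≤ 2 ^ j := pow_le_pow_right₀ one_le_two hj
      nlinarith
    exact subset_toMeasurable μ _ (this hu)
  have hUsub : ∀ k, U k ⊆ T k := fun k => iInter_subset_of_subset k (iInter_subset _ le_rfl)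
  refine ⟨disjointed U, fun k => MeasurableSet.disjointed hUmeas k, disjoint_disjointed U,
    ?_, ?_, ?_⟩
  · rw [iUnion_disjointed]
    apply eq_univ_of_forall
    intro u
    obtain ⟨n, hn⟩ := pow_unbounded_of_one_lt (dist u x / t) one_lt_two
    have : u ∈ ball x (2 ^ n * t) := by
      rw [mem_ball]
      calc dist u x = dist u x / t * t := by field_simp
        _ < 2 ^ n * t := by gcongr
    exact mem_iUnion.2 ⟨n, hballU n this⟩
  · intro k
    calc μ (disjointed U k) ≤ μ (T k) := measure_mono ((disjointed_subset U k).trans (hUsub k))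
      _ = μ (ball x (2 ^ k * t)) := measure_toMeasurable _
  · intro k u hu
    rw [← Order.succ_eq_add_one, hUmono.disjointed_succ (not_isMax k)] at hu
    have : u ∉ ball x (2 ^ k * t) := fun h => hu.2 (hballU k h)
    rw [mem_ball, not_lt] at this
    rw [dist_comm]
    exact this



lemma c₀_lt (hc₀ : 1 < c₀) (hσ : Real.logb 2 c₀ < σ) : c₀ * (2:ℝ) ^ (-σ) < 1 := by
  have h1 : c₀ < 2 ^ σ := by
    calc c₀ = 2 ^ Real.logb 2 c₀ := (Real.rpow_logb two_pos (by norm_num) (by linarith)).symm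
      _ < 2 ^ σ := (Real.rpow_lt_rpow_left_iff one_lt_two).2 hσ
  have h2 : (0:ℝ) < 2 ^ (-σ) := Real.rpow_pos_of_pos two_pos _
  have h3 : (2:ℝ) ^ σ * 2 ^ (-σ) = 1 := by
    rw [← Real.rpow_add two_pos]; simp
  nlinarith

lemma Aenn_ne_top (hc₀ : 1 < c₀) (hσ : Real.logb 2 c₀ < σ) : Aenn c₀ σ ≠ ⊤ := by
  have hr : ENNReal.ofReal (c₀ * (2:ℝ) ^ (-σ)) < 1 := ENNReal.ofReal_lt_one.2 (c₀_lt hc₀ hσ)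
  have h1 : (1 : ENNReal) - ENNReal.ofReal (c₀ * (2:ℝ) ^ (-σ)) ≠ 0 := by
    rw [ne_eq, tsub_eq_zero_iff_le]
    exact fun h => absurd hr (not_lt.2 h)
  rw [Aenn]
  refine ENNReal.add_ne_top.2 ⟨ENNReal.one_ne_top, ENNReal.mul_ne_top ENNReal.ofReal_ne_top ?_⟩
  rwa [ne_eq, ENNReal.inv_eq_top]

lemma one_le_Aenn : 1 ≤ Aenn c₀ σ := le_add_right le_rfl

/-- Pointwise bound of the kernel on the `k`-th annulus. -/
lemma F_le_Bk (hσpos : 0 < σ) {x u : M} {t : ℝ} (ht : 0 < t) (k : ℕ)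
    (h : ∀ j, k = j + 1 → 2 ^ j * t ≤ dist x u) :
    ENNReal.ofReal ((1 + dist x u / t) ^ (-σ)) ≤ Bk σ k := by
  have hb : (1:ℝ) ≤ 1 + dist x u / t := by
    have := dist_nonneg (x := x) (y := u); have : 0 ≤ dist x u / t := by positivity
    linarith
  match k with
  | 0 =>
    rw [Bk]
    refine ENNReal.ofReal_le_one.2 ?_
    exact Real.rpow_le_one_of_one_le_of_nonpos hb (by linarith)
  | j + 1 =>
    have hd : 2 ^ j * t ≤ dist x u := h j rfl
    have h2 : (2:ℝ) ^ j ≤ 1 + dist x u / t := by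
      have : (2:ℝ) ^ j ≤ dist x u / t := (le_div_iff₀ ht).2 hd
      linarith
    have hmono : (1 + dist x u / t) ^ (-σ) ≤ ((2:ℝ) ^ j) ^ (-σ) :=
      Real.rpow_le_rpow_of_nonpos (by positivity) h2 (by linarith)
    have heq : ((2:ℝ) ^ j) ^ (-σ) = ((2:ℝ) ^ (-σ)) ^ j := by
      rw [← Real.rpow_natCast 2 j, ← Real.rpow_mul (by norm_num), mul_comm,
        Real.rpow_mul (by norm_num), Real.rpow_natCast]
    rw [Bk, ← ENNReal.ofReal_pow (Real.rpow_nonneg (by norm_num) _)]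
    exact ENNReal.ofReal_le_ofReal (by rw [← heq]; exact hmono)

lemma sum_Bk_bound (hc₀ : 1 < c₀) (hσ : Real.logb 2 c₀ < σ)
    (hfin : ∀ (x : M) (r : ℝ), 0 < r → μ (ball x r) < ⊤)
    (hdbl : ∀ (x : M) (r : ℝ), 0 < r →
      (μ (ball x (2 * r))).toReal ≤ c₀ * (μ (ball x r)).toReal)
    (x : M) (t : ℝ) (ht : 0 < t) (D : ℕ → Set M)
    (hle : ∀ k, μ (D k) ≤ μ (ball x (2 ^ k * t))) :
    ∑' k, Bk σ k * μ (D k) ≤ Aenn c₀ σ * μ (ball x t) := by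
  set q : ENNReal := ENNReal.ofReal ((2:ℝ) ^ (-σ)) with hq
  set P : ENNReal := ENNReal.ofReal c₀ with hP
  have hqP : q * P = ENNReal.ofReal (c₀ * (2:ℝ) ^ (-σ)) := by
    rw [hq, hP, ← ENNReal.ofReal_mul (Real.rpow_nonneg (by norm_num) _), mul_comm]
  have hDk : ∀ k, μ (D k) ≤ P ^ k * μ (ball x t) := fun k =>
    (hle k).trans (ball_pow_bound hc₀ hfin hdbl x t ht k)
  rw [tsum_eq_zero_add' ENNReal.summable]
  have h0 : Bk σ 0 * μ (D 0) ≤ μ (ball x t) := by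
    rw [Bk, one_mul]
    refine (hle 0).trans ?_
    simp
  have htail : ∑' k, Bk σ (k+1) * μ (D (k+1)) ≤
      P * (1 - q * P)⁻¹ * μ (ball x t) := by
    calc ∑' k, Bk σ (k+1) * μ (D (k+1))
        ≤ ∑' k, (q * P) ^ k * (P * μ (ball x t)) := by
          refine ENNReal.tsum_le_tsum fun k => ?_
          rw [Bk]
          calc q ^ k * μ (D (k+1)) ≤ q ^ k * (P ^ (k+1) * μ (ball x t)) := by
                gcongr; exact hDk (k+1)
            _ = (q * P) ^ k * (P * μ (ball x t)) := by ring
      _ = (∑' k, (q * P) ^ k) * (P * μ (ball x t)) := ENNReal.tsum_mul_right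
      _ = P * (1 - q * P)⁻¹ * μ (ball x t) := by
          rw [ENNReal.tsum_geometric]; ring
  calc Bk σ 0 * μ (D 0) + ∑' k, Bk σ (k+1) * μ (D (k+1))
      ≤ μ (ball x t) + P * (1 - q * P)⁻¹ * μ (ball x t) := add_le_add h0 htail
    _ = Aenn c₀ σ * μ (ball x t) := by rw [Aenn, ← hqP, ← hP]; ring


lemma ball_center_swap (hc₀ : 1 < c₀)
    (hfin : ∀ (x : M) (r : ℝ), 0 < r → μ (ball x r) < ⊤)
    (hdbl : ∀ (x : M) (r : ℝ), 0 < r →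
      (μ (ball x (2 * r))).toReal ≤ c₀ * (μ (ball x r)).toReal)
    (x y : M) (t : ℝ) (ht : 0 < t) :
    (μ (ball y t)).toReal ≤
      c₀ * (1 + dist x y / t) ^ Real.logb 2 c₀ * (μ (ball x t)).toReal := by
  set d := Real.logb 2 c₀ with hd
  set L := Real.logb 2 (1 + dist x y / t) with hL
  have hD0 : 0 ≤ dist x y / t := by positivity
  have hD1 : (1:ℝ) ≤ 1 + dist x y / t := by linarith
  have hLnn : 0 ≤ L := Real.logb_nonneg one_lt_two hD1
  set n := ⌈L⌉₊ with hn
  have h2L : (2:ℝ) ^ L = 1 + dist x y / t := Real.rpow_logb two_pos (by norm_num) (by linarith)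
  have h1 : (1 + dist x y / t) ≤ 2 ^ n := by
    calc (1 + dist x y / t) = 2 ^ L := h2L.symm
      _ ≤ 2 ^ ((n:ℝ)) := Real.rpow_le_rpow_of_exponent_le one_le_two (Nat.le_ceil L)
      _ = 2 ^ n := by rw [Real.rpow_natCast]
  have hsub : ball y t ⊆ ball x (2 ^ n * t) := by
    intro u hu
    rw [mem_ball] at hu ⊢
    calc dist u x ≤ dist u y + dist y x := dist_triangle u y x
      _ < t + dist x y := by rw [dist_comm y x]; linarith
      _ = (1 + dist x y / t) * t := by field_simp
      _ ≤ 2 ^ n * t := by gcongr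
  have hmu : μ (ball y t) ≤ ENNReal.ofReal c₀ ^ n * μ (ball x t) :=
    (measure_mono hsub).trans (ball_pow_bound hc₀ hfin hdbl x t ht n)
  have hfin2 : ENNReal.ofReal c₀ ^ n * μ (ball x t) ≠ ⊤ :=
    ENNReal.mul_ne_top (ENNReal.pow_ne_top ENNReal.ofReal_ne_top) (hfin x t ht).ne
  have h2 : (μ (ball y t)).toReal ≤ c₀ ^ n * (μ (ball x t)).toReal := by
    have := ENNReal.toReal_mono hfin2 hmu
    rwa [ENNReal.toReal_mul, ENNReal.toReal_pow, ENNReal.toReal_ofReal (by linarith)] at this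
  have hc₀pos : (0:ℝ) < c₀ := by linarith
  have h3 : c₀ ^ n ≤ c₀ * (1 + dist x y / t) ^ d := by
    have hcL : c₀ ^ L = (1 + dist x y / t) ^ d := by
      have hc2d : c₀ = (2:ℝ) ^ d := (Real.rpow_logb two_pos (by norm_num) hc₀pos).symm
      calc c₀ ^ L = ((2:ℝ) ^ d) ^ L := by rw [← hc2d]
        _ = (2:ℝ) ^ (d * L) := (Real.rpow_mul (by norm_num) d L).symm
        _ = (2:ℝ) ^ (L * d) := by rw [mul_comm]
        _ = ((2:ℝ) ^ L) ^ d := Real.rpow_mul (by norm_num) L d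
        _ = (1 + dist x y / t) ^ d := by rw [h2L]
    have hnL : (n:ℝ) ≤ L + 1 := le_of_lt (Nat.ceil_lt_add_one hLnn)
    calc (c₀:ℝ) ^ n = c₀ ^ ((n:ℝ)) := (Real.rpow_natCast c₀ n).symm
      _ ≤ c₀ ^ (L + 1) := Real.rpow_le_rpow_of_exponent_le (le_of_lt hc₀) hnL
      _ = c₀ ^ L * c₀ := by rw [Real.rpow_add hc₀pos, Real.rpow_one]
      _ = c₀ * (1 + dist x y / t) ^ d := by rw [hcL]; ring
  have hm : 0 ≤ (μ (ball x t)).toReal := ENNReal.toReal_nonneg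
  calc (μ (ball y t)).toReal ≤ c₀ ^ n * (μ (ball x t)).toReal := h2
    _ ≤ (c₀ * (1 + dist x y / t) ^ d) * (μ (ball x t)).toReal := by gcongr
    _ = c₀ * (1 + dist x y / t) ^ d * (μ (ball x t)).toReal := by ring

lemma pair_lintegral (hc₀ : 1 < c₀) (hσ : Real.logb 2 c₀ < σ)
    (hfin : ∀ (x : M) (r : ℝ), 0 < r → μ (ball x r) < ⊤)
    (hdbl : ∀ (x : M) (r : ℝ), 0 < r →
      (μ (ball x (2 * r))).toReal ≤ c₀ * (μ (ball x r)).toReal)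
    (x y : M) (t : ℝ) (ht : 0 < t) :
    ∫⁻ u, (ENNReal.ofReal ((1 + dist x u / t) ^ (-σ)) +
        ENNReal.ofReal ((1 + dist u y / t) ^ (-σ))) ∂μ ≤
      Aenn c₀ σ * (μ (ball x t) + μ (ball y t)) := by
  have hσpos : 0 < σ := lt_trans (Real.logb_pos one_lt_two hc₀) hσ
  obtain ⟨D, hDmeas, hDdisj, hDuniv, hDle, hDdist⟩ := exists_cover μ x t ht
  obtain ⟨E, hEmeas, hEdisj, hEuniv, hEle, hEdist⟩ := exists_cover μ y t ht
  set G : M → ENNReal := fun u => ENNReal.ofReal ((1 + dist x u / t) ^ (-σ)) +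
      ENNReal.ofReal ((1 + dist u y / t) ^ (-σ)) with hG
  have hcover : (⋃ p : ℕ × ℕ, D p.1 ∩ E p.2) = univ := by
    apply eq_univ_of_forall
    intro u
    have hu1 : u ∈ ⋃ k, D k := hDuniv ▸ mem_univ u
    have hu2 : u ∈ ⋃ k, E k := hEuniv ▸ mem_univ u
    obtain ⟨j, hj⟩ := mem_iUnion.1 hu1
    obtain ⟨k, hk⟩ := mem_iUnion.1 hu2
    exact mem_iUnion.2 ⟨(j, k), hj, hk⟩
  have hpiece : ∀ p : ℕ × ℕ, ∫⁻ u in D p.1 ∩ E p.2, G u ∂μ ≤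
      (Bk σ p.1 + Bk σ p.2) * μ (D p.1 ∩ E p.2) := by
    rintro ⟨j, k⟩
    calc ∫⁻ u in D j ∩ E k, G u ∂μ ≤ ∫⁻ _ in D j ∩ E k, (Bk σ j + Bk σ k) ∂μ := by
          refine setLIntegral_mono' ((hDmeas j).inter (hEmeas k)) fun u hu => ?_
          refine add_le_add ?_ ?_
          · exact F_le_Bk hσpos ht j fun m hm => hDdist m u (by rw [← hm]; exact hu.1)
          · have := F_le_Bk (x := y) (u := u) hσpos ht k
              fun m hm => hEdist m u (by rw [← hm]; exact hu.2)
            rwa [dist_comm y u] at this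
      _ = (Bk σ j + Bk σ k) * μ (D j ∩ E k) := setLIntegral_const _ _
  have hsum1 : ∑' p : ℕ × ℕ, Bk σ p.1 * μ (D p.1 ∩ E p.2) ≤ Aenn c₀ σ * μ (ball x t) := by
    have hfib : ∀ j, ∑' k, μ (D j ∩ E k) = μ (D j) := by
      intro j
      rw [← measure_iUnion (fun k k' hkk' =>
          (hEdisj hkk').mono inter_subset_right inter_subset_right)
          (fun k => (hDmeas j).inter (hEmeas k))]
      rw [← inter_iUnion, hEuniv, inter_univ]
    calc ∑' p : ℕ × ℕ, Bk σ p.1 * μ (D p.1 ∩ E p.2)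
        = ∑' j, ∑' k, Bk σ j * μ (D j ∩ E k) := ENNReal.tsum_prod'
      _ = ∑' j, Bk σ j * μ (D j) := by
          refine tsum_congr fun j => ?_
          rw [ENNReal.tsum_mul_left, hfib j]
      _ ≤ Aenn c₀ σ * μ (ball x t) := sum_Bk_bound hc₀ hσ hfin hdbl x t ht D hDle
  have hsum2 : ∑' p : ℕ × ℕ, Bk σ p.2 * μ (D p.1 ∩ E p.2) ≤ Aenn c₀ σ * μ (ball y t) := by
    have hfib : ∀ k, ∑' j, μ (D j ∩ E k) = μ (E k) := by
      intro k
      rw [← measure_iUnion (fun j j' hjj' =>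
          (hDdisj hjj').mono inter_subset_left inter_subset_left)
          (fun j => (hDmeas j).inter (hEmeas k))]
      rw [← iUnion_inter, hDuniv, univ_inter]
    calc ∑' p : ℕ × ℕ, Bk σ p.2 * μ (D p.1 ∩ E p.2)
        = ∑' j, ∑' k, Bk σ k * μ (D j ∩ E k) := ENNReal.tsum_prod'
      _ = ∑' k, ∑' j, Bk σ k * μ (D j ∩ E k) := ENNReal.tsum_comm
      _ = ∑' k, Bk σ k * μ (E k) := by
          refine tsum_congr fun k => ?_
          rw [ENNReal.tsum_mul_left, hfib k]
      _ ≤ Aenn c₀ σ * μ (ball y t) := sum_Bk_bound hc₀ hσ hfin hdbl y t ht E hEle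
  calc ∫⁻ u, G u ∂μ = ∫⁻ u in ⋃ p : ℕ × ℕ, D p.1 ∩ E p.2, G u ∂μ := by
        rw [hcover, setLIntegral_univ]
    _ ≤ ∑' p : ℕ × ℕ, ∫⁻ u in D p.1 ∩ E p.2, G u ∂μ := lintegral_iUnion_le _ _
    _ ≤ ∑' p : ℕ × ℕ, (Bk σ p.1 + Bk σ p.2) * μ (D p.1 ∩ E p.2) :=
        ENNReal.tsum_le_tsum hpiece
    _ = ∑' p : ℕ × ℕ, Bk σ p.1 * μ (D p.1 ∩ E p.2) +
        ∑' p : ℕ × ℕ, Bk σ p.2 * μ (D p.1 ∩ E p.2) := by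
        rw [← ENNReal.tsum_add]
        exact tsum_congr fun p => by ring
    _ ≤ Aenn c₀ σ * μ (ball x t) + Aenn c₀ σ * μ (ball y t) := add_le_add hsum1 hsum2
    _ = Aenn c₀ σ * (μ (ball x t) + μ (ball y t)) := (mul_add _ _ _).symm

lemma ptwise_bound (hσpos : 0 < σ) (x y u : M) {t : ℝ} (ht : 0 < t) :
    (1 + dist x u / t) ^ (-σ) * (1 + dist u y / t) ^ (-σ) ≤
      2 ^ σ * (1 + dist x y / t) ^ (-σ) *
        ((1 + dist x u / t) ^ (-σ) + (1 + dist u y / t) ^ (-σ)) := by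
  set a := 1 + dist x u / t with hadef
  set b := 1 + dist u y / t with hbdef
  set DD := 1 + dist x y / t with hDdef
  have ha : (1:ℝ) ≤ a := by
    have : 0 ≤ dist x u / t := by positivity
    simp [hadef]; linarith
  have hb : (1:ℝ) ≤ b := by
    have : 0 ≤ dist u y / t := by positivity
    simp [hbdef]; linarith
  have hD : (1:ℝ) ≤ DD := by
    have : 0 ≤ dist x y / t := by positivity
    simp [hDdef]; linarith
  have htri : dist x y / t ≤ dist x u / t + dist u y / t := by
    rw [← add_div]
    gcongr
    exact dist_triangle x u y
  clear_value a b DD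
  have ha0 : (0:ℝ) < a := by linarith
  have hb0 : (0:ℝ) < b := by linarith
  have hD0 : (0:ℝ) < DD := by linarith
  have hA0 : 0 ≤ a ^ (-σ) := Real.rpow_nonneg (by linarith) _
  have hB0 : 0 ≤ b ^ (-σ) := Real.rpow_nonneg (by linarith) _
  have hK0 : 0 ≤ 2 ^ σ * DD ^ (-σ) := by positivity
  have hhalf : ∀ w : ℝ, 0 < w → DD ≤ 2 * w → w ^ (-σ) ≤ 2 ^ σ * DD ^ (-σ) := by
    intro w hw hDw
    have h1 : DD / 2 ≤ w := by linarith
    have h2 : w ^ (-σ) ≤ (DD / 2) ^ (-σ) :=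
      Real.rpow_le_rpow_of_nonpos (by linarith) h1 (by linarith)
    have h3 : (DD / 2) ^ (-σ) = DD ^ (-σ) / 2 ^ (-σ) :=
      Real.div_rpow (by linarith) (by norm_num) _
    have h4 : (2:ℝ) ^ (-σ) = ((2:ℝ) ^ σ)⁻¹ := Real.rpow_neg (by norm_num) σ
    have h5 : (0:ℝ) < 2 ^ σ := Real.rpow_pos_of_pos two_pos σ
    calc w ^ (-σ) ≤ (DD / 2) ^ (-σ) := h2
      _ = DD ^ (-σ) / ((2:ℝ) ^ σ)⁻¹ := by rw [h3, h4]
      _ = 2 ^ σ * DD ^ (-σ) := by field_simp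
  rcases le_total (dist x u) (dist u y) with hcase | hcase
  · have hDb : DD ≤ 2 * b := by
      rw [hDdef, hbdef]
      have : dist x u / t ≤ dist u y / t := by gcongr
      nlinarith
    have hBK : b ^ (-σ) ≤ 2 ^ σ * DD ^ (-σ) := hhalf b hb0 hDb
    calc a ^ (-σ) * b ^ (-σ) ≤ a ^ (-σ) * (2 ^ σ * DD ^ (-σ)) := by gcongr
      _ = (2 ^ σ * DD ^ (-σ)) * a ^ (-σ) := by ring
      _ ≤ (2 ^ σ * DD ^ (-σ)) * (a ^ (-σ) + b ^ (-σ)) := by gcongr; linarith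
  · have hDa : DD ≤ 2 * a := by
      rw [hDdef, hadef]
      have : dist u y / t ≤ dist x u / t := by gcongr
      nlinarith
    have hAK : a ^ (-σ) ≤ 2 ^ σ * DD ^ (-σ) := hhalf a ha0 hDa
    calc a ^ (-σ) * b ^ (-σ) ≤ (2 ^ σ * DD ^ (-σ)) * b ^ (-σ) := by gcongr
      _ ≤ (2 ^ σ * DD ^ (-σ)) * (a ^ (-σ) + b ^ (-σ)) := by gcongr; linarith

end IDCaux

theorem integral_decay_convolution {M : Type*} [MetricSpace M] [MeasurableSpace M]
    (μ : Measure M) (c₀ : ℝ) (hc₀ : 1 < c₀)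
    (hpos : ∀ (x : M) (r : ℝ), 0 < r → 0 < μ (ball x r))
    (hfin : ∀ (x : M) (r : ℝ), 0 < r → μ (ball x r) < ⊤)
    (hdbl : ∀ (x : M) (r : ℝ), 0 < r →
      (μ (ball x (2 * r))).toReal ≤ c₀ * (μ (ball x r)).toReal)
    (σ : ℝ) (hσ : Real.logb 2 c₀ < σ) :
    ∃ c > 0, ∀ (x y : M) (t : ℝ), 0 < t →
      (∫ u, (1 + dist x u / t) ^ (-σ) * (1 + dist u y / t) ^ (-σ) ∂μ) ≤
        c * (μ (ball x t)).toReal * (1 + dist x y / t) ^ (-σ + Real.logb 2 c₀) := by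
  classical
  set d := Real.logb 2 c₀ with hd
  have hdpos : 0 < d := Real.logb_pos one_lt_two hc₀
  have hσpos : 0 < σ := lt_trans hdpos hσ
  set A : ℝ := (IDCaux.Aenn c₀ σ).toReal with hA
  have hAtop : IDCaux.Aenn c₀ σ ≠ ⊤ := IDCaux.Aenn_ne_top hc₀ hσ
  have hA1 : (1:ℝ) ≤ A := by
    rw [hA, ← ENNReal.toReal_one]
    exact ENNReal.toReal_mono hAtop IDCaux.one_le_Aenn
  have h2σ : (0:ℝ) < 2 ^ σ := Real.rpow_pos_of_pos two_pos σ
  refine ⟨2 ^ σ * A * (1 + c₀), by positivity, ?_⟩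
  intro x y t ht
  set DD := dist x y / t with hDD
  have hDD0 : 0 ≤ DD := by positivity
  have hDD1 : (0:ℝ) < 1 + DD := by linarith
  set g : M → ℝ := fun u => (1 + dist x u / t) ^ (-σ) * (1 + dist u y / t) ^ (-σ) with hg
  have hg0 : ∀ u, 0 ≤ g u := fun u =>
    mul_nonneg (Real.rpow_nonneg (by positivity) _) (Real.rpow_nonneg (by positivity) _)
  have hrpos : (0:ℝ) < (1 + DD) ^ (-σ + d) := Real.rpow_pos_of_pos hDD1 _
  have hm0 : 0 ≤ (μ (ball x t)).toReal := ENNReal.toReal_nonneg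
  by_cases hInt : Integrable g μ
  swap
  · rw [integral_undef hInt]
    positivity
  -- main case
  have heq : ∫ u, g u ∂μ = (∫⁻ u, ENNReal.ofReal (g u) ∂μ).toReal := by
    exact integral_eq_lintegral_of_nonneg_ae (Filter.Eventually.of_forall hg0)
      hInt.aestronglyMeasurable
  set K : ℝ := 2 ^ σ * (1 + DD) ^ (-σ) with hK
  have hK0 : 0 ≤ K := by positivity
  have hptle : ∀ u, ENNReal.ofReal (g u) ≤ ENNReal.ofReal K *
      (ENNReal.ofReal ((1 + dist x u / t) ^ (-σ)) +
        ENNReal.ofReal ((1 + dist u y / t) ^ (-σ))) := by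
    intro u
    rw [← ENNReal.ofReal_add (Real.rpow_nonneg (by positivity) _)
      (Real.rpow_nonneg (by positivity) _), ← ENNReal.ofReal_mul hK0]
    exact ENNReal.ofReal_le_ofReal (IDCaux.ptwise_bound hσpos x y u ht)
  have hlin : ∫⁻ u, ENNReal.ofReal (g u) ∂μ ≤
      ENNReal.ofReal K * (IDCaux.Aenn c₀ σ * (μ (ball x t) + μ (ball y t))) := by
    calc ∫⁻ u, ENNReal.ofReal (g u) ∂μ
        ≤ ∫⁻ u, ENNReal.ofReal K *
            (ENNReal.ofReal ((1 + dist x u / t) ^ (-σ)) +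
              ENNReal.ofReal ((1 + dist u y / t) ^ (-σ))) ∂μ := lintegral_mono hptle
      _ = ENNReal.ofReal K * ∫⁻ u, (ENNReal.ofReal ((1 + dist x u / t) ^ (-σ)) +
            ENNReal.ofReal ((1 + dist u y / t) ^ (-σ))) ∂μ :=
          lintegral_const_mul' _ _ ENNReal.ofReal_ne_top
      _ ≤ ENNReal.ofReal K * (IDCaux.Aenn c₀ σ * (μ (ball x t) + μ (ball y t))) := by
          gcongr
          exact IDCaux.pair_lintegral hc₀ hσ hfin hdbl x y t ht
  have hRtop : ENNReal.ofReal K * (IDCaux.Aenn c₀ σ * (μ (ball x t) + μ (ball y t))) ≠ ⊤ :=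
    ENNReal.mul_ne_top ENNReal.ofReal_ne_top (ENNReal.mul_ne_top hAtop
      (ENNReal.add_ne_top.2 ⟨(hfin x t ht).ne, (hfin y t ht).ne⟩))
  have hstep1 : ∫ u, g u ∂μ ≤
      K * (A * ((μ (ball x t)).toReal + (μ (ball y t)).toReal)) := by
    rw [heq]
    have := ENNReal.toReal_mono hRtop hlin
    rwa [ENNReal.toReal_mul, ENNReal.toReal_mul, ENNReal.toReal_add (hfin x t ht).ne
      (hfin y t ht).ne, ENNReal.toReal_ofReal hK0, ← hA] at this
  have hswap : (μ (ball y t)).toReal ≤ c₀ * (1 + DD) ^ d * (μ (ball x t)).toReal :=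
    IDCaux.ball_center_swap hc₀ hfin hdbl x y t ht
  set m := (μ (ball x t)).toReal with hm
  have hE1 : (1:ℝ) ≤ (1 + DD) ^ d := by
    calc (1:ℝ) = (1 + DD) ^ (0:ℝ) := (Real.rpow_zero _).symm
      _ ≤ (1 + DD) ^ d := Real.rpow_le_rpow_of_exponent_le (by linarith) hdpos.le
  have hsum : (μ (ball x t)).toReal + (μ (ball y t)).toReal ≤
      (1 + c₀) * (1 + DD) ^ d * m := by
    have hc₀0 : (0:ℝ) < c₀ := by linarith
    nlinarith [hswap, hE1, hm0]
  have hrearr : (1 + DD) ^ (-σ + d) = (1 + DD) ^ (-σ) * (1 + DD) ^ d :=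
    Real.rpow_add hDD1 _ _
  calc ∫ u, g u ∂μ ≤ K * (A * ((μ (ball x t)).toReal + (μ (ball y t)).toReal)) := hstep1
    _ ≤ K * (A * ((1 + c₀) * (1 + DD) ^ d * m)) := by
        gcongr
    _ = 2 ^ σ * A * (1 + c₀) * m * ((1 + DD) ^ (-σ) * (1 + DD) ^ d) := by rw [hK]; ring
    _ = 2 ^ σ * A * (1 + c₀) * m * (1 + DD) ^ (-σ + d) := by rw [hrearr]
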